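/- Let L > μ > 0 and let t ≥ 1 be a natural number. The function g(η) = μ·(1−ηL)^{2t} + L·(1−ημ)^{2t} attains its global minimum over η ∈ ℝ at η = 2/(L+μ), and the minimum value equals (μ+L)·((L−μ)/(L+μ))^{2t}. -/

import Mathlib

/-- Bernoulli inequality for even exponents, valid for all real `a`. -/
lemma bernoulli_even_all (n : ℕ) (a : ℝ) :
    1 + (2 * n : ℝ) * a ≤ (1 + a) ^ (2 * n) := by
  rcases le_or_gt (-2) a with h | h
  · have := one_add_mul_le_pow h (2 * n)
    simpa [mul_comm] using this
  · have hnn : (0:ℝ) ≤ (1 + a) ^ (2 * n) := (even_two_mul n).pow_nonneg _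
    rcases Nat.eq_zero_or_pos n with rfl | hn
    · simp
    · have hn1 : (1:ℝ) ≤ (n:ℝ) := by exact_mod_cast hn
      nlinarith [hnn]

/-- Tangent line inequality for even powers at a nonzero point `c`. -/
lemma tangent_even_pow (k : ℕ) (c z : ℝ) (hc : c ≠ 0) (hk : Even (k + 1)) :
    c ^ (k + 1) + (k + 1 : ℝ) * c ^ k * (z - c) ≤ z ^ (k + 1) := by
  have hcpow : (0:ℝ) < c ^ (k + 1) := Even.pow_pos hk hc
  obtain ⟨n, hn'⟩ := hk
  have hn : k + 1 = 2 * n := by omega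
  set a : ℝ := (z - c) / c with ha
  have hz : z = c * (1 + a) := by rw [ha]; field_simp; ring
  have hb := bernoulli_even_all n a
  rw [← hn] at hb
  have hcast : (2 : ℝ) * (n : ℝ) = (k : ℝ) + 1 := by exact_mod_cast hn.symm
  rw [hcast] at hb
  have h1 : c ^ (k + 1) * (1 + (k + 1 : ℝ) * a) ≤ c ^ (k + 1) * (1 + a) ^ (k + 1) :=
    mul_le_mul_of_nonneg_left hb hcpow.le
  have h2 : c ^ (k + 1) * (1 + a) ^ (k + 1) = z ^ (k + 1) := by
    rw [hz, mul_pow]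
  have h3 : c ^ (k + 1) * (1 + (k + 1 : ℝ) * a) =
      c ^ (k + 1) + (k + 1 : ℝ) * c ^ k * (z - c) := by
    rw [ha, pow_succ]
    field_simp
  linarith [h2 ▸ h3 ▸ h1]

/-- For `L > μ > 0` and a natural number `t ≥ 1`, the function
`g(η) = μ·(1−ηL)^(2t) + L·(1−ημ)^(2t)` attains its global minimum over `η ∈ ℝ`
at `η = 2/(L+μ)`, and the minimum value equals `(μ+L)·((L−μ)/(L+μ))^(2t)`. -/
theorem optimal_stepsize_for_gd
    (L μ : ℝ) (hLμ : L > μ) (hμ : μ > 0) (t : ℕ) (ht : 1 ≤ t)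
    (g : ℝ → ℝ) (hg : ∀ η, g η = μ * (1 - η * L) ^ (2 * t) + L * (1 - η * μ) ^ (2 * t)) :
    (∀ η : ℝ, g (2 / (L + μ)) ≤ g η) ∧
      g (2 / (L + μ)) = (μ + L) * ((L - μ) / (L + μ)) ^ (2 * t) := by
  have hL : (0:ℝ) < L := lt_trans hμ hLμ
  have hs : (0:ℝ) < L + μ := by linarith
  have hs0 : L + μ ≠ 0 := ne_of_gt hs
  obtain ⟨c, hcdef⟩ : ∃ c : ℝ, c = (L - μ) / (L + μ) := ⟨_, rfl⟩
  have hcpos : 0 < c := hcdef ▸ div_pos (by linarith) hs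
  have hc0 : c ≠ 0 := ne_of_gt hcpos
  have hceq : (L + μ) * c = L - μ := by rw [hcdef]; field_simp
  have hx0 : 1 - (2 / (L + μ)) * L = -c := by rw [hcdef]; field_simp; ring
  have hy0 : 1 - (2 / (L + μ)) * μ = c := by rw [hcdef]; field_simp; ring
  obtain ⟨k, hk⟩ : ∃ k, 2 * t = k + 1 := ⟨2 * t - 1, by omega⟩
  have hkeven : Even (k + 1) := hk ▸ even_two_mul t
  have hnegpow : (-c) ^ (k + 1) = c ^ (k + 1) := Even.neg_pow hkeven _
  have hoddk : Odd k := by rcases hkeven with ⟨m, hm⟩; exact ⟨m - 1, by omega⟩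
  have hoddpow : (-c) ^ k = -c ^ k := Odd.neg_pow hoddk _
  have hval : g (2 / (L + μ)) = (μ + L) * c ^ (2 * t) := by
    rw [hg, hx0, hy0, hk, hnegpow]; ring
  constructor
  · intro η
    rw [hval, hg, hk]
    have hcon : μ * (1 - η * L) - L * (1 - η * μ) = μ - L := by ring
    have h1 := tangent_even_pow k (-c) (1 - η * L) (neg_ne_zero.mpr hc0) hkeven
    have h2 := tangent_even_pow k c (1 - η * μ) hc0 hkeven
    rw [hnegpow, hoddpow] at h1
    have h1' := mul_le_mul_of_nonneg_left h1 hμ.le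
    have h2' := mul_le_mul_of_nonneg_left h2 hL.le
    have key : μ * (c ^ (k + 1) + (k + 1 : ℝ) * -c ^ k * ((1 - η * L) - -c))
        + L * (c ^ (k + 1) + (k + 1 : ℝ) * c ^ k * ((1 - η * μ) - c))
        = (μ + L) * c ^ (k + 1) := by
      linear_combination (-(k + 1 : ℝ) * c ^ k) * hcon - ((k + 1 : ℝ) * c ^ k) * hceq
    linarith [h1', h2', key]
  · rw [hval, hcdef]
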